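/- arXiv:2603.24105 — 3 statements merged into one kernel-verified Lean document; each statement's English description precedes it below -/
import Mathlib

section
/- Let U : Ω → 𝒰 and W, W' : Ω → 𝒲 be random variables into standard Borel spaces such that W and W' are identically distributed and U, W, W' are mutually independent. Let q : 𝒰 × 𝒲 → 𝒵 and f : 𝒵 → ℝ^d be measurable functions with f(q(U, W)) square-integrable. If E[‖f(q(U, W)) − f(q(U, W'))‖²] = 0, then there exists a measurable function h : 𝒰 → ℝ^d such that f(q(U, W)) = h(U) almost surely. In particular, writing W = (L, V_L, ε_L) for the aggregated layer index, layer-specific latent factor, and noise of the latent-factor model Z_L = q_L(U, V_L, ε_L), at any global minimum of the matching loss the common embedding C_L = f_C(Z_L) is almost surely a measurable function of the shared latent factor U alone. -/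
/-!
STATEMENT 7: Let U : Ω → 𝒰 and W, W' : Ω → 𝒲 be random variables into standard
Borel spaces with W, W' identically distributed and U, W, W' mutually
independent. If E[‖f(q(U,W)) − f(q(U,W'))‖²] = 0 for measurable q, f with
f(q(U,W)) square-integrable, then f(q(U,W)) is almost surely a measurable
function of U alone. (Applied with W = (L, V_L, ε_L), this says that at any
global minimum of the matching loss the common embedding C_L = f_C(Z_L) is
almost surely a measurable function of the shared latent factor U alone.)
-/

open MeasureTheory ProbabilityTheory

/-- If `W, W'` are identically distributed, `U, W, W'` are mutually independent,
`f(q(U,W))` is square-integrable, and `E[‖f(q(U,W)) − f(q(U,W'))‖²] = 0`, then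
`f(q(U,W)) = h(U)` almost surely for some measurable `h`. -/
theorem stmt7 {Ω : Type*} [MeasurableSpace Ω] (μ : Measure Ω)
    [IsProbabilityMeasure μ]
    {𝒰 𝒲 𝒵 : Type*}
    [MeasurableSpace 𝒰] [StandardBorelSpace 𝒰]
    [MeasurableSpace 𝒲] [StandardBorelSpace 𝒲]
    [MeasurableSpace 𝒵] {d : ℕ}
    (U : Ω → 𝒰) (W W' : Ω → 𝒲)
    (hU : Measurable U) (hW : Measurable W) (hW' : Measurable W')
    -- W and W' are identically distributed
    (hid : Measure.map W μ = Measure.map W' μ)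
    -- U, W, W' are mutually independent
    (hWW' : IndepFun W W' μ)
    (hU_WW' : IndepFun U (fun ω => (W ω, W' ω)) μ)
    (q : 𝒰 × 𝒲 → 𝒵) (hq : Measurable q)
    (f : 𝒵 → EuclideanSpace ℝ (Fin d)) (hf : Measurable f)
    (hL2 : MemLp (fun ω => f (q (U ω, W ω))) 2 μ)
    (hzero : ∫ ω, ‖f (q (U ω, W ω)) - f (q (U ω, W' ω))‖ ^ 2 ∂μ = 0) :
    ∃ h : 𝒰 → EuclideanSpace ℝ (Fin d), Measurable h ∧
      (fun ω => f (q (U ω, W ω))) =ᵐ[μ] fun ω => h (U ω) := by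
  set g : 𝒰 × 𝒲 → EuclideanSpace ℝ (Fin d) := fun p => f (q p) with hg_def
  have hg : Measurable g := hf.comp hq
  set ν : Measure 𝒲 := Measure.map W μ with hν
  set μU : Measure 𝒰 := Measure.map U μ with hμU
  have : IsProbabilityMeasure ν := Measure.isProbabilityMeasure_map hW.aemeasurable
  have : IsProbabilityMeasure μU := Measure.isProbabilityMeasure_map hU.aemeasurable
  -- law of (U, W, W') is μU ⊗ (ν ⊗ ν)
  have hlawWW' : Measure.map (fun ω => (W ω, W' ω)) μ = ν.prod ν := by
    rw [(indepFun_iff_map_prod_eq_prod_map_map hW.aemeasurable hW'.aemeasurable).1 hWW', ← hid, hν]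
  have hlaw : Measure.map (fun ω => (U ω, (W ω, W' ω))) μ = μU.prod (ν.prod ν) := by
    rw [(indepFun_iff_map_prod_eq_prod_map_map hU.aemeasurable
      (hW.prodMk hW').aemeasurable).1 hU_WW', hlawWW']
  have hlawUW : Measure.map (fun ω => (U ω, W ω)) μ = μU.prod ν := by
    have hind : IndepFun U W μ := hU_WW'.comp measurable_id measurable_fst
    rw [(indepFun_iff_map_prod_eq_prod_map_map hU.aemeasurable hW.aemeasurable).1 hind]
  -- step 1 : integrand is zero a.e.
  have hY : MemLp (fun ω => f (q (U ω, W' ω))) 2 μ := by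
    have hUW' : Measure.map (fun ω => (U ω, W' ω)) μ = Measure.map (fun ω => (U ω, W ω)) μ := by
      rw [hlawUW]
      have hind' : IndepFun U W' μ := hU_WW'.comp measurable_id measurable_snd
      rw [(indepFun_iff_map_prod_eq_prod_map_map hU.aemeasurable hW'.aemeasurable).1 hind', ← hid]
    have : MemLp g 2 (Measure.map (fun ω => (U ω, W ω)) μ) :=
      (memLp_map_measure_iff hg.aestronglyMeasurable (hU.prodMk hW).aemeasurable).2 hL2
    rw [← hUW'] at this
    exact (memLp_map_measure_iff hg.aestronglyMeasurable (hU.prodMk hW').aemeasurable).1 this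
  have hdiff : MemLp (fun ω => f (q (U ω, W ω)) - f (q (U ω, W' ω))) 2 μ := hL2.sub hY
  have hint : Integrable (fun ω => ‖f (q (U ω, W ω)) - f (q (U ω, W' ω))‖ ^ 2) μ :=
    (memLp_two_iff_integrable_sq_norm hdiff.aestronglyMeasurable).1 hdiff
  have hae0 : ∀ᵐ ω ∂μ, f (q (U ω, W ω)) = f (q (U ω, W' ω)) := by
    have := (integral_eq_zero_iff_of_nonneg (fun ω => by positivity) hint).1 hzero
    filter_upwards [this] with ω hω
    simp only [Pi.zero_apply] at hω
    have h0 : ‖f (q (U ω, W ω)) - f (q (U ω, W' ω))‖ = 0 := by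
      have := pow_eq_zero_iff (n := 2) (by norm_num) |>.1 hω
      exact this
    rw [← sub_eq_zero]
    exact norm_eq_zero.1 h0
  -- transfer to product measure
  have haeP : ∀ᵐ p ∂(μU.prod (ν.prod ν)), g (p.1, p.2.1) = g (p.1, p.2.2) := by
    rw [← hlaw]
    exact (ae_map_iff (hU.prodMk (hW.prodMk hW')).aemeasurable
      (measurableSet_eq_fun (hg.comp (measurable_fst.prodMk (measurable_fst.comp measurable_snd)))
        (hg.comp (measurable_fst.prodMk (measurable_snd.comp measurable_snd))))).2 hae0
  -- define h
  set h : 𝒰 → EuclideanSpace ℝ (Fin d) := fun u => ∫ w, g (u, w) ∂ν with hh_def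
  have hh_meas : Measurable h :=
    (hg.stronglyMeasurable.integral_prod_right').measurable
  -- a.e. u, a.e. w, g (u,w) = h u
  have key : ∀ᵐ p ∂(μU.prod ν), g p = h p.1 := by
    have h1 := Measure.ae_ae_of_ae_prod haeP
    refine (Measure.ae_prod_iff_ae_ae
      (p := fun p : 𝒰 × 𝒲 => g p = h p.1)
      (measurableSet_eq_fun hg (hh_meas.comp measurable_fst))).2 ?_
    filter_upwards [h1] with u hu
    have h2 := Measure.ae_ae_of_ae_prod hu
    filter_upwards [h2] with w hw
    have : h u = g (u, w) := by
      rw [hh_def]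
      calc (∫ w', g (u, w') ∂ν) = ∫ _, g (u, w) ∂ν := integral_congr_ae (by
            filter_upwards [hw] with w' hw'; exact hw'.symm)
        _ = g (u, w) := by simp
    exact this.symm
  refine ⟨h, hh_meas, ?_⟩
  have := (ae_map_iff (hU.prodMk hW).aemeasurable
    (measurableSet_eq_fun hg (hh_meas.comp measurable_fst))).1 (by rw [hlawUW]; exact key)
  filter_upwards [this] with ω hω using hω
end

section
/- Let L and Z be random variables taking values in finite sets, let f_P be a function on the range of Z, and set P* = f_P(Z). (i) If H(L | P*) = H(L | Z)—i.e., the encoder f_P attains the infimum of H(L | f(Z)) over all functions f, which equals H(L | Z)—then I(L; Z | P*) = 0 and L and Z are conditionally independent given P*, so P* is a sufficient statistic for L with respect to Z. (ii) If, in addition, P* is minimal sufficient in the sense that the σ-algebra σ(P*) generated by P* is contained in any other sufficient σ-algebra, and V is a random variable taking values in a standard Borel space for which σ(V) is sufficient for L (i.e., L and Z are conditionally independent given V), then σ(P*) ⊆ σ(V) and there exists a measurable function g with P* = g(V) almost surely; that is, the optimal private embedding is almost surely a measurable function of the layer-specific latent factor alone. -/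
/-!
STATEMENT 11: Let L, Z be random variables with values in finite sets and set
P* = f_P(Z). (i) If H(L|P*) = H(L|Z) then I(L;Z|P*) = 0 and L, Z are
conditionally independent given P*, so P* is a sufficient statistic for L with
respect to Z. (ii) If in addition P* is minimal sufficient (σ(P*) is contained
in any other sufficient σ-algebra) and V is a random variable into a standard
Borel space with σ(V) sufficient for L, then σ(P*) ⊆ σ(V) and there is a
measurable g with P* = g(V) almost surely.
-/

open MeasureTheory
open scoped BigOperators Classical

noncomputable section

/-- Conditional entropy `H(L|A)` of the first variable given the second,
computed from a joint pmf `p : K → A → ℝ` (terms with `p(ℓ,a) = 0` vanish). -/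
def condEnt {K A : Type*} [Fintype K] [Fintype A] (p : K → A → ℝ) : ℝ :=
  -∑ ℓ, ∑ a, p ℓ a * Real.log (p ℓ a / ∑ ℓ', p ℓ' a)

/-- Joint pmf of `(L, P)` where `P = f(Z)`, obtained by pushing the joint pmf of
`(L, Z)` forward along `f`. -/
def jointLP {K S T : Type*} [Fintype K] [Fintype S] [Fintype T]
    (p : K → S → ℝ) (f : S → T) (ℓ : K) (t : T) : ℝ :=
  ∑ z, if f z = t then p ℓ z else 0

/-- Joint pmf of `(L, (Z, P))` where `P = f(Z)`. -/
def jointLZP {K S T : Type*} [Fintype K] [Fintype S] [Fintype T]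
    (p : K → S → ℝ) (f : S → T) (ℓ : K) (zt : S × T) : ℝ :=
  if f zt.1 = zt.2 then p ℓ zt.1 else 0

/-- Conditional mutual information `I(L;Z|P) = H(L|P) − H(L|(Z,P))`
for `P = f(Z)`. -/
def condMI {K S T : Type*} [Fintype K] [Fintype S] [Fintype T]
    (p : K → S → ℝ) (f : S → T) : ℝ :=
  condEnt (jointLP p f) - condEnt (jointLZP p f)

/-- `f(Z)` is a sufficient statistic for `L` with respect to `Z` at pmf level:
`p(ℓ|z) = p(ℓ|f(z))` for every `z` with `p(z) > 0` (conditional independence of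
`L` and `Z` given `f(Z)`). -/
def IsSufficient {K S T : Type*} [Fintype K] [Fintype S] [Fintype T]
    (p : K → S → ℝ) (f : S → T) : Prop :=
  ∀ (ℓ : K) (z : S), 0 < (∑ ℓ', p ℓ' z) →
    p ℓ z / (∑ ℓ', p ℓ' z)
      = jointLP p f ℓ (f z) / (∑ ℓ', jointLP p f ℓ' (f z))

/-- Joint pmf of the pair `(L, Z)` of random variables. -/
def jointPMF {Ω K S : Type*} [MeasurableSpace Ω] (μ : Measure Ω)
    (L : Ω → K) (Z : Ω → S) (ℓ : K) (z : S) : ℝ :=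
  (μ (L ⁻¹' {ℓ} ∩ Z ⁻¹' {z})).toReal

/-- A σ-algebra `m` is sufficient for `L` with respect to `Z` if `L` and `Z`
are conditionally independent given `m`. -/
def SuffAlg {Ω K S : Type*} [MeasurableSpace Ω] (μ : Measure Ω)
    (L : Ω → K) (Z : Ω → S) (m : MeasurableSpace Ω) : Prop :=
  ∀ (ℓ : K) (z : S),
    (μ[Set.indicator (L ⁻¹' {ℓ} ∩ Z ⁻¹' {z}) (fun _ => (1 : ℝ)) | m])
      =ᵐ[μ] fun ω =>
        (μ[Set.indicator (L ⁻¹' {ℓ}) (fun _ => (1 : ℝ)) | m]) ω *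
        (μ[Set.indicator (Z ⁻¹' {z}) (fun _ => (1 : ℝ)) | m]) ω

open MeasureTheory
open scoped BigOperators Classical

lemma condEnt_jointLZP {K S T : Type*} [Fintype K] [Fintype S] [Fintype T]
    (p : K → S → ℝ) (f : S → T) :
    condEnt (jointLZP p f) = condEnt p := by
  unfold condEnt
  congr 1
  apply Finset.sum_congr rfl
  intro ℓ _
  rw [Fintype.sum_prod_type]
  apply Finset.sum_congr rfl
  intro z _
  have hterm : ∀ t : T,
      jointLZP p f ℓ (z, t) *
        Real.log (jointLZP p f ℓ (z, t) / ∑ ℓ', jointLZP p f ℓ' (z, t))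
      = if f z = t then p ℓ z * Real.log (p ℓ z / ∑ ℓ', p ℓ' z) else 0 := by
    intro t
    unfold jointLZP
    simp only
    split_ifs with h
    · rfl
    · simp
  simp only [hterm]
  simp [Finset.sum_ite_eq]

lemma condEnt_jointLP_eq {K S T : Type*} [Fintype K] [Fintype S] [Fintype T]
    (p : K → S → ℝ) (f : S → T) :
    condEnt (jointLP p f)
      = -∑ ℓ, ∑ z, p ℓ z *
          Real.log (jointLP p f ℓ (f z) / ∑ ℓ', jointLP p f ℓ' (f z)) := by
  unfold condEnt
  congr 1
  apply Finset.sum_congr rfl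
  intro ℓ _
  set c : T → ℝ := fun t => Real.log (jointLP p f ℓ t / ∑ ℓ', jointLP p f ℓ' t)
    with hc
  calc ∑ t, jointLP p f ℓ t * c t
      = ∑ t, ∑ z, (if f z = t then p ℓ z * c t else 0) := by
        apply Finset.sum_congr rfl
        intro t _
        rw [jointLP, Finset.sum_mul]
        apply Finset.sum_congr rfl
        intro z _
        split_ifs <;> simp
    _ = ∑ z, ∑ t, (if f z = t then p ℓ z * c t else 0) := Finset.sum_comm
    _ = ∑ z, p ℓ z * c (f z) := by
        apply Finset.sum_congr rfl
        intro z _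
        simp [Finset.sum_ite_eq]



/-- Gibbs: pointwise lower bound for each term. -/
lemma gibbs_term_ge {K : Type*} [Fintype K] (a b : K → ℝ)
    (ha : ∀ j, 0 ≤ a j) (hab : ∀ j, a j ≤ b j)
    (hA : 0 < ∑ j, a j) (ℓ : K) :
    a ℓ - (∑ j, a j) * b ℓ / (∑ j, b j)
      ≤ a ℓ * (Real.log (a ℓ / ∑ j, a j) - Real.log (b ℓ / ∑ j, b j)) := by
  set A := ∑ j, a j with hAdef
  set B := ∑ j, b j with hBdef
  have hb : ∀ j, 0 ≤ b j := fun j => le_trans (ha j) (hab j)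
  have hAB : A ≤ B := Finset.sum_le_sum fun j _ => hab j
  have hB : 0 < B := lt_of_lt_of_le hA hAB
  rcases eq_or_lt_of_le (ha ℓ) with h0 | hpos
  · rw [← h0]
    have h1 : (0:ℝ) ≤ A * b ℓ / B := div_nonneg (mul_nonneg hA.le (hb ℓ)) hB.le
    have h2 : (0:ℝ) * (Real.log (0 / A) - Real.log (b ℓ / B)) = 0 := by ring
    rw [h2]; linarith
  · have hbℓ : 0 < b ℓ := lt_of_lt_of_le hpos (hab ℓ)
    set t : ℝ := (b ℓ / B) / (a ℓ / A) with ht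
    have haA : a ℓ / A ≠ 0 := by positivity
    have hbB : b ℓ / B ≠ 0 := by positivity
    have htpos : 0 < t := by positivity
    have hlogt : Real.log t = Real.log (b ℓ / B) - Real.log (a ℓ / A) :=
      Real.log_div hbB haA
    have hlog : Real.log (a ℓ / A) - Real.log (b ℓ / B) = - Real.log t := by
      rw [hlogt]; ring
    have hle : Real.log t ≤ t - 1 := Real.log_le_sub_one_of_pos htpos
    have : a ℓ * (Real.log (a ℓ / A) - Real.log (b ℓ / B)) = a ℓ * (- Real.log t) := by
      rw [hlog]
    rw [this]
    have h2 : a ℓ * (1 - t) ≤ a ℓ * (- Real.log t) := by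
      have := mul_le_mul_of_nonneg_left hle (le_of_lt hpos)
      linarith
    refine le_trans (le_of_eq ?_) h2
    rw [ht]
    field_simp

lemma gibbs_sum_nonneg {K : Type*} [Fintype K] (a b : K → ℝ)
    (ha : ∀ j, 0 ≤ a j) (hab : ∀ j, a j ≤ b j)
    (hA : 0 < ∑ j, a j) :
    0 ≤ ∑ ℓ, a ℓ * (Real.log (a ℓ / ∑ j, a j) - Real.log (b ℓ / ∑ j, b j)) := by
  have hb : ∀ j, 0 ≤ b j := fun j => le_trans (ha j) (hab j)
  have hAB : (∑ j, a j) ≤ ∑ j, b j := Finset.sum_le_sum fun j _ => hab j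
  have hB : 0 < ∑ j, b j := lt_of_lt_of_le hA hAB
  have key : ∑ ℓ, (a ℓ - (∑ j, a j) * b ℓ / (∑ j, b j))
      ≤ ∑ ℓ, a ℓ * (Real.log (a ℓ / ∑ j, a j) - Real.log (b ℓ / ∑ j, b j)) :=
    Finset.sum_le_sum fun ℓ _ => gibbs_term_ge a b ha hab hA ℓ
  refine le_trans (le_of_eq ?_) key
  rw [Finset.sum_sub_distrib]
  have : ∑ ℓ, (∑ j, a j) * b ℓ / (∑ j, b j) = ∑ j, a j := by
    rw [← Finset.sum_div, ← Finset.mul_sum, mul_div_assoc, div_self hB.ne', mul_one]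
  rw [this, sub_self]

lemma gibbs_eq_case {K : Type*} [Fintype K] (a b : K → ℝ)
    (ha : ∀ j, 0 ≤ a j) (hab : ∀ j, a j ≤ b j)
    (hA : 0 < ∑ j, a j)
    (hS : ∑ ℓ, a ℓ * (Real.log (a ℓ / ∑ j, a j) - Real.log (b ℓ / ∑ j, b j)) = 0) :
    ∀ ℓ, a ℓ / (∑ j, a j) = b ℓ / (∑ j, b j) := by
  have hb : ∀ j, 0 ≤ b j := fun j => le_trans (ha j) (hab j)
  have hAB : (∑ j, a j) ≤ ∑ j, b j := Finset.sum_le_sum fun j _ => hab j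
  have hB : 0 < ∑ j, b j := lt_of_lt_of_le hA hAB
  set A := ∑ j, a j
  set B := ∑ j, b j
  -- each excess term is zero
  have hsum0 : ∑ ℓ, (a ℓ * (Real.log (a ℓ / A) - Real.log (b ℓ / B))
      - (a ℓ - A * b ℓ / B)) = 0 := by
    rw [Finset.sum_sub_distrib, hS, zero_sub, neg_eq_zero, Finset.sum_sub_distrib]
    have : ∑ ℓ, A * b ℓ / B = A := by
      rw [← Finset.sum_div, ← Finset.mul_sum, mul_div_assoc, div_self hB.ne', mul_one]
    rw [this, sub_self]
  have hterm0 : ∀ ℓ ∈ Finset.univ, (a ℓ * (Real.log (a ℓ / A) - Real.log (b ℓ / B))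
      - (a ℓ - A * b ℓ / B)) = 0 := by
    refine (Finset.sum_eq_zero_iff_of_nonneg ?_).mp hsum0
    intro ℓ _
    have := gibbs_term_ge a b ha hab hA ℓ
    linarith
  intro ℓ
  have h0 := hterm0 ℓ (Finset.mem_univ ℓ)
  rcases eq_or_lt_of_le (ha ℓ) with hz | hpos
  · -- a ℓ = 0 forces b ℓ = 0
    rw [← hz] at h0 ⊢
    simp only [zero_mul, zero_sub, sub_eq_zero, neg_eq_zero] at h0
    -- h0 : 0 - A * b ℓ / B = 0 →  b ℓ = 0
    have hbz : b ℓ = 0 := by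
      have : A * b ℓ / B = 0 := by linarith [h0]
      have := (div_eq_zero_iff.mp this)
      rcases this with h | h
      · rcases mul_eq_zero.mp h with h' | h'
        · exact absurd h' hA.ne'
        · exact h'
      · exact absurd h hB.ne'
    rw [hbz]
    simp
  · have hbℓ : 0 < b ℓ := lt_of_lt_of_le hpos (hab ℓ)
    set t : ℝ := (b ℓ / B) / (a ℓ / A) with ht
    have haA : a ℓ / A ≠ 0 := by positivity
    have hbB : b ℓ / B ≠ 0 := by positivity
    have htpos : 0 < t := by positivity
    have hlogt : Real.log t = Real.log (b ℓ / B) - Real.log (a ℓ / A) :=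
      Real.log_div hbB haA
    have hlog : Real.log (a ℓ / A) - Real.log (b ℓ / B) = - Real.log t := by
      rw [hlogt]; ring
    have hid : a ℓ - A * b ℓ / B = a ℓ * (1 - t) := by
      rw [ht]; field_simp
    rw [hlog, hid] at h0
    -- h0 : a ℓ * (-log t) - a ℓ * (1 - t) = 0
    have hfac : a ℓ * ((t - 1) - Real.log t) = 0 := by linarith
    have h1 : (t - 1) - Real.log t = 0 := by
      rcases mul_eq_zero.mp hfac with h | h
      · exact absurd h hpos.ne'
      · exact h
    have ht1 : t = 1 := by
      by_contra hne
      have := Real.log_lt_sub_one_of_pos htpos hne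
      linarith
    have hbb : b ℓ / B = (a ℓ / A) * t := by
      rw [ht]; field_simp
    rw [hbb, ht1, mul_one]


lemma le_jointLP {K S T : Type*} [Fintype K] [Fintype S] [Fintype T]
    (p : K → S → ℝ) (f : S → T) (hp : ∀ ℓ z, 0 ≤ p ℓ z) (ℓ : K) (z : S) :
    p ℓ z ≤ jointLP p f ℓ (f z) := by
  unfold jointLP
  have hnn : ∀ z' ∈ Finset.univ, (0:ℝ) ≤ (if f z' = f z then p ℓ z' else 0) := by
    intro z' _
    split_ifs
    · exact hp ℓ z'
    · exact le_refl 0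
  have := Finset.single_le_sum hnn (Finset.mem_univ z)
  simpa using this

lemma suff_of_opt {K S T : Type*} [Fintype K] [Fintype S] [Fintype T]
    (p : K → S → ℝ) (f : S → T) (hp : ∀ ℓ z, 0 ≤ p ℓ z)
    (hopt : condEnt (jointLP p f) = condEnt p) : IsSufficient p f := by
  have hq : ∀ ℓ z, p ℓ z ≤ jointLP p f ℓ (f z) := le_jointLP p f hp
  have h1 : ∑ ℓ, ∑ z, p ℓ z *
      (Real.log (p ℓ z / ∑ ℓ', p ℓ' z)
        - Real.log (jointLP p f ℓ (f z) / ∑ ℓ', jointLP p f ℓ' (f z))) = 0 := by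
    have h2 := condEnt_jointLP_eq p f
    rw [hopt] at h2
    unfold condEnt at h2
    have h3 : ∑ ℓ, ∑ z, p ℓ z * Real.log (p ℓ z / ∑ ℓ', p ℓ' z)
        = ∑ ℓ, ∑ z, p ℓ z *
            Real.log (jointLP p f ℓ (f z) / ∑ ℓ', jointLP p f ℓ' (f z)) :=
      neg_injective h2
    simp only [mul_sub, Finset.sum_sub_distrib]
    rw [h3, sub_self]
  rw [Finset.sum_comm] at h1
  have hinner_nonneg : ∀ z : S, 0 ≤ ∑ ℓ, p ℓ z *
      (Real.log (p ℓ z / ∑ ℓ', p ℓ' z)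
        - Real.log (jointLP p f ℓ (f z) / ∑ ℓ', jointLP p f ℓ' (f z))) := by
    intro z
    rcases lt_or_eq_of_le (Finset.sum_nonneg fun ℓ _ => hp ℓ z) with hpz | hpz
    · exact gibbs_sum_nonneg (fun ℓ => p ℓ z) (fun ℓ => jointLP p f ℓ (f z))
        (fun ℓ => hp ℓ z) (fun ℓ => hq ℓ z) hpz
    · have hz0 : ∀ ℓ, p ℓ z = 0 := by
        intro ℓ
        have := (Finset.sum_eq_zero_iff_of_nonneg fun ℓ' _ => hp ℓ' z).mp hpz.symm
        exact this ℓ (Finset.mem_univ ℓ)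
      apply le_of_eq
      symm
      apply Finset.sum_eq_zero
      intro ℓ _
      rw [hz0 ℓ, zero_mul]
  have hinner0 : ∀ z ∈ Finset.univ, (∑ ℓ, p ℓ z *
      (Real.log (p ℓ z / ∑ ℓ', p ℓ' z)
        - Real.log (jointLP p f ℓ (f z) / ∑ ℓ', jointLP p f ℓ' (f z)))) = 0 :=
    (Finset.sum_eq_zero_iff_of_nonneg fun z _ => hinner_nonneg z).mp h1
  intro ℓ z hpz
  exact gibbs_eq_case (fun ℓ => p ℓ z) (fun ℓ => jointLP p f ℓ (f z))
    (fun ℓ => hp ℓ z) (fun ℓ => hq ℓ z) hpz (hinner0 z (Finset.mem_univ z)) ℓ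


lemma meas_decomp {Ω β : Type*} [MeasurableSpace Ω] (μ : Measure Ω)
    [IsFiniteMeasure μ] [Fintype β] [MeasurableSpace β] [MeasurableSingletonClass β]
    (f : Ω → β) (hf : Measurable f) (A : Set Ω) (hA : MeasurableSet A) (B : Set β) :
    (μ (A ∩ f ⁻¹' B)).toReal
      = ∑ b, if b ∈ B then (μ (A ∩ f ⁻¹' {b})).toReal else 0 := by
  classical
  have hset : A ∩ f ⁻¹' B = ⋃ b ∈ Finset.univ.filter (· ∈ B), A ∩ f ⁻¹' {b} := by
    ext ω
    simp only [Set.mem_inter_iff, Set.mem_preimage, Set.mem_iUnion, Finset.mem_filter,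
      Finset.mem_univ, true_and, Set.mem_singleton_iff]
    constructor
    · rintro ⟨hω, hB⟩; exact ⟨f ω, hB, hω, rfl⟩
    · rintro ⟨b, hb, hω, hfb⟩; exact ⟨hω, hfb ▸ hb⟩
  have hdisj : (↑(Finset.univ.filter (· ∈ B)) : Set β).PairwiseDisjoint
      (fun b => A ∩ f ⁻¹' {b}) := by
    intro b _ b' _ hne
    refine Set.disjoint_left.mpr ?_
    rintro ω ⟨_, hb⟩ ⟨_, hb'⟩
    exact hne (by
      simp only [Set.mem_preimage, Set.mem_singleton_iff] at hb hb'
      rw [← hb, ← hb'])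
  have hmeas : ∀ b ∈ Finset.univ.filter (· ∈ B),
      MeasurableSet (A ∩ f ⁻¹' {b}) :=
    fun b _ => hA.inter (hf (measurableSet_singleton b))
  rw [hset, measure_biUnion_finset hdisj hmeas, ENNReal.toReal_sum
    (fun b _ => measure_ne_top μ _), Finset.sum_filter]

lemma condexp_comap_finite {Ω T : Type*} [mΩ : MeasurableSpace Ω] (μ : Measure Ω)
    [IsProbabilityMeasure μ] [Fintype T] [MeasurableSpace T]
    [MeasurableSingletonClass T]
    (P : Ω → T) (hP : Measurable P) (A : Set Ω) (hA : MeasurableSet A) :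
    μ[Set.indicator A (fun _ => (1 : ℝ)) | MeasurableSpace.comap P inferInstance]
      =ᵐ[μ] fun ω => (μ (A ∩ P ⁻¹' {P ω})).toReal / (μ (P ⁻¹' {P ω})).toReal := by
  classical
  have hm : MeasurableSpace.comap P inferInstance ≤ mΩ := hP.comap_le
  set c : T → ℝ := fun t => (μ (A ∩ P ⁻¹' {t})).toReal / (μ (P ⁻¹' {t})).toReal
    with hc
  set g : Ω → ℝ := fun ω => c (P ω) with hg
  have hf_int : Integrable (Set.indicator A (fun _ => (1 : ℝ))) μ :=
    (integrable_const (1 : ℝ)).indicator hA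
  have hg_sum : g = fun ω => ∑ t, Set.indicator (P ⁻¹' {t}) (fun _ => c t) ω := by
    funext ω
    rw [hg]
    simp only [Set.indicator_apply, Set.mem_preimage, Set.mem_singleton_iff]
    rw [Finset.sum_ite_eq Finset.univ (P ω) c]
    simp
  have hg_int : Integrable g μ := by
    rw [hg_sum]
    exact integrable_finset_sum _ fun t _ =>
      (integrable_const (c t)).indicator (hP (measurableSet_singleton t))
  have hgm : AEStronglyMeasurable[MeasurableSpace.comap P inferInstance] g μ := by
    have hPm : Measurable[MeasurableSpace.comap P inferInstance] P := Measurable.of_comap_le le_rfl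
    have hcm : Measurable c := measurable_of_countable c
    exact StronglyMeasurable.aestronglyMeasurable
      (Measurable.stronglyMeasurable (hcm.comp hPm))
  have key : ∀ t, (μ (P ⁻¹' {t})).toReal * c t = (μ (A ∩ P ⁻¹' {t})).toReal := by
    intro t
    by_cases h : (μ (P ⁻¹' {t})).toReal = 0
    · have h0 : μ (P ⁻¹' {t}) = 0 := by
        have := measure_ne_top μ (P ⁻¹' {t})
        exact (ENNReal.toReal_eq_zero_iff _).mp h |>.resolve_right this
      have : μ (A ∩ P ⁻¹' {t}) = 0 :=
        measure_mono_null Set.inter_subset_right h0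
      rw [h, this, zero_mul, ENNReal.toReal_zero]
    · rw [hc]
      field_simp
  have hg_eq : ∀ s : Set Ω, MeasurableSet[MeasurableSpace.comap P inferInstance] s → μ s < ⊤ →
      ∫ x in s, g x ∂μ = ∫ x in s, Set.indicator A (fun _ => (1 : ℝ)) x ∂μ := by
    rintro s ⟨B, hB, rfl⟩ _
    have hPB : MeasurableSet (P ⁻¹' B) := hP hB
    -- RHS
    have hRHS : ∫ x in P ⁻¹' B, Set.indicator A (fun _ => (1 : ℝ)) x ∂μ
        = (μ (A ∩ P ⁻¹' B)).toReal := by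
      rw [integral_indicator_const (1 : ℝ) hA, measureReal_restrict_apply hA,
        smul_eq_mul, mul_one, measureReal_def]
    -- LHS
    have hLHS : ∫ x in P ⁻¹' B, g x ∂μ
        = ∑ t, (μ (P ⁻¹' {t} ∩ P ⁻¹' B)).toReal * c t := by
      rw [hg_sum]
      rw [integral_finset_sum _ fun t _ =>
        ((integrable_const (c t)).indicator (hP (measurableSet_singleton t))).integrableOn]
      apply Finset.sum_congr rfl
      intro t _
      rw [integral_indicator_const (c t) (hP (measurableSet_singleton t)),
        measureReal_restrict_apply (hP (measurableSet_singleton t)), smul_eq_mul,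
        measureReal_def]
    rw [hLHS, hRHS]
    have hsplit : ∀ t : T, P ⁻¹' {t} ∩ P ⁻¹' B
        = if t ∈ B then P ⁻¹' {t} else ∅ := by
      intro t
      split_ifs with h
      · ext ω
        simp only [Set.mem_inter_iff, Set.mem_preimage, Set.mem_singleton_iff]
        exact ⟨fun ⟨h1, _⟩ => h1, fun h1 => ⟨h1, h1 ▸ h⟩⟩
      · ext ω
        simp only [Set.mem_inter_iff, Set.mem_preimage, Set.mem_singleton_iff,
          Set.mem_empty_iff_false, iff_false, not_and]
        intro h1
        rw [h1]; exact h
    have hdec := meas_decomp μ P hP A hA B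
    rw [Set.preimage, ← Set.preimage] at hdec
    rw [hdec]
    apply Finset.sum_congr rfl
    intro t _
    rw [hsplit t]
    split_ifs with h
    · exact key t
    · simp
  exact (ae_eq_condExp_of_forall_setIntegral_eq hm hf_int
    (fun s _ _ => hg_int.integrableOn) hg_eq hgm).symm
/-- (i) If the encoder attains `H(L|f_P(Z)) = H(L|Z)`, then `I(L;Z|f_P(Z)) = 0`
and `L`, `Z` are conditionally independent given `P* = f_P(Z)`, so `P*` is a
sufficient statistic for `L` with respect to `Z` (both at pmf level and as a
sufficient σ-algebra). (ii) If moreover `P*` is minimal sufficient and `V` is a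
random variable into a standard Borel space with `σ(V)` sufficient, then
`σ(P*) ⊆ σ(V)` and `P* = g(V)` almost surely for some measurable `g`. -/
theorem stmt11 {Ω : Type*} [mΩ : MeasurableSpace Ω] (μ : Measure Ω)
    [IsProbabilityMeasure μ]
    {K S T 𝒱 : Type*} [Fintype K] [Fintype S] [Fintype T] [Nonempty T]
    [MeasurableSpace K] [MeasurableSingletonClass K]
    [MeasurableSpace S] [MeasurableSingletonClass S]
    [MeasurableSpace T] [MeasurableSingletonClass T]
    [MeasurableSpace 𝒱] [StandardBorelSpace 𝒱]
    (L : Ω → K) (Z : Ω → S) (hL : Measurable L) (hZ : Measurable Z)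
    (fP : S → T)
    (hopt : condEnt (jointLP (jointPMF μ L Z) fP) = condEnt (jointPMF μ L Z)) :
    -- (i)
    condMI (jointPMF μ L Z) fP = 0
    ∧ IsSufficient (jointPMF μ L Z) fP
    ∧ SuffAlg μ L Z (MeasurableSpace.comap (fun ω => fP (Z ω)) inferInstance)
    -- (ii)
    ∧ ∀ V : Ω → 𝒱, Measurable V →
        SuffAlg μ L Z (MeasurableSpace.comap V inferInstance) →
        (∀ m : MeasurableSpace Ω, m ≤ mΩ → @SuffAlg Ω K S mΩ μ L Z m →
          MeasurableSpace.comap (fun ω => fP (Z ω)) inferInstance ≤ m) →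
        MeasurableSpace.comap (fun ω => fP (Z ω)) inferInstance
            ≤ MeasurableSpace.comap V inferInstance
        ∧ ∃ g : 𝒱 → T, Measurable g ∧
            (fun ω => fP (Z ω)) =ᵐ[μ] fun ω => g (V ω) := by
  
  classical
  have hfP : Measurable fP := measurable_of_countable fP
  have hP : Measurable (fun ω => fP (Z ω)) := hfP.comp hZ
  have hp : ∀ ℓ z, 0 ≤ jointPMF μ L Z ℓ z := fun _ _ => ENNReal.toReal_nonneg
  have hsuff : IsSufficient (jointPMF μ L Z) fP :=
    suff_of_opt _ _ hp hopt
  -- measure translations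
  have hM1 : ∀ z : S, (∑ ℓ, jointPMF μ L Z ℓ z) = (μ (Z ⁻¹' {z})).toReal := by
    intro z
    have h := meas_decomp μ L hL (Z ⁻¹' {z}) (hZ (measurableSet_singleton z))
      Set.univ
    simp only [Set.preimage_univ, Set.inter_univ, Set.mem_univ, if_true] at h
    rw [h]
    apply Finset.sum_congr rfl
    intro ℓ _
    rw [jointPMF, Set.inter_comm]
  have hM2 : ∀ (ℓ : K) (t : T), jointLP (jointPMF μ L Z) fP ℓ t
      = (μ (L ⁻¹' {ℓ} ∩ (fun ω => fP (Z ω)) ⁻¹' {t})).toReal := by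
    intro ℓ t
    have h := meas_decomp μ Z hZ (L ⁻¹' {ℓ}) (hL (measurableSet_singleton ℓ))
      (fP ⁻¹' {t})
    have hpre : (fun ω => fP (Z ω)) ⁻¹' {t} = Z ⁻¹' (fP ⁻¹' {t}) := rfl
    rw [hpre, h, jointLP]
    apply Finset.sum_congr rfl
    intro z _
    simp only [Set.mem_preimage, Set.mem_singleton_iff, jointPMF]
  have hM3 : ∀ t : T, (∑ ℓ, jointLP (jointPMF μ L Z) fP ℓ t)
      = (μ ((fun ω => fP (Z ω)) ⁻¹' {t})).toReal := by
    intro t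
    have h := meas_decomp μ L hL ((fun ω => fP (Z ω)) ⁻¹' {t})
      (hP (measurableSet_singleton t)) Set.univ
    simp only [Set.preimage_univ, Set.inter_univ, Set.mem_univ, if_true] at h
    rw [h]
    apply Finset.sum_congr rfl
    intro ℓ _
    rw [hM2 ℓ t, Set.inter_comm]
  -- cross-multiplied sufficiency
  have hcross : ∀ (ℓ : K) (z : S),
      jointPMF μ L Z ℓ z * (μ ((fun ω => fP (Z ω)) ⁻¹' {fP z})).toReal
        = jointLP (jointPMF μ L Z) fP ℓ (fP z) * (μ (Z ⁻¹' {z})).toReal := by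
    intro ℓ z
    rcases lt_or_eq_of_le (Finset.sum_nonneg fun ℓ' (_ : ℓ' ∈ Finset.univ) =>
        hp ℓ' z) with hpz | hpz
    · have h := hsuff ℓ z hpz
      have hQ : 0 < ∑ ℓ', jointLP (jointPMF μ L Z) fP ℓ' (fP z) :=
        lt_of_lt_of_le hpz
          (Finset.sum_le_sum fun ℓ' _ => le_jointLP _ fP hp ℓ' z)
      rw [div_eq_div_iff hpz.ne' hQ.ne'] at h
      rw [← hM3, ← hM1]
      exact h
    · have hz0 : jointPMF μ L Z ℓ z = 0 := by
        have := (Finset.sum_eq_zero_iff_of_nonneg fun ℓ' (_ : ℓ' ∈ Finset.univ)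
          => hp ℓ' z).mp hpz.symm
        exact this ℓ (Finset.mem_univ ℓ)
      rw [hz0, ← hM1 z, ← hpz]
      ring
  -- pointwise product identity
  have hpoint : ∀ (ℓ : K) (z : S) (t : T),
      (μ ((L ⁻¹' {ℓ} ∩ Z ⁻¹' {z}) ∩ (fun ω => fP (Z ω)) ⁻¹' {t})).toReal
          / (μ ((fun ω => fP (Z ω)) ⁻¹' {t})).toReal
        = ((μ (L ⁻¹' {ℓ} ∩ (fun ω => fP (Z ω)) ⁻¹' {t})).toReal
            / (μ ((fun ω => fP (Z ω)) ⁻¹' {t})).toReal)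
          * ((μ (Z ⁻¹' {z} ∩ (fun ω => fP (Z ω)) ⁻¹' {t})).toReal
            / (μ ((fun ω => fP (Z ω)) ⁻¹' {t})).toReal) := by
    intro ℓ z t
    by_cases hQ : (μ ((fun ω => fP (Z ω)) ⁻¹' {t})).toReal = 0
    · rw [hQ]
      simp
    by_cases hfz : fP z = t
    · subst hfz
      have hsub : Z ⁻¹' {z} ⊆ (fun ω => fP (Z ω)) ⁻¹' {fP z} := by
        intro ω hω
        simp only [Set.mem_preimage, Set.mem_singleton_iff] at hω ⊢
        rw [hω]
      have h1 : Z ⁻¹' {z} ∩ (fun ω => fP (Z ω)) ⁻¹' {fP z} = Z ⁻¹' {z} :=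
        Set.inter_eq_left.mpr hsub
      have h2 : (L ⁻¹' {ℓ} ∩ Z ⁻¹' {z}) ∩ (fun ω => fP (Z ω)) ⁻¹' {fP z}
          = L ⁻¹' {ℓ} ∩ Z ⁻¹' {z} :=
        Set.inter_eq_left.mpr (Set.inter_subset_right.trans hsub)
      rw [h1, h2]
      have hQpos : 0 < (μ ((fun ω => fP (Z ω)) ⁻¹' {fP z})).toReal :=
        lt_of_le_of_ne ENNReal.toReal_nonneg (Ne.symm hQ)
      rw [div_mul_div_comm, div_eq_div_iff hQpos.ne' (by positivity)]
      have hkey := hcross ℓ z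
      rw [jointPMF, hM2] at hkey
      nlinarith [hkey]
    · have h0 : Z ⁻¹' {z} ∩ (fun ω => fP (Z ω)) ⁻¹' {t} = ∅ := by
        ext ω
        simp only [Set.mem_inter_iff, Set.mem_preimage, Set.mem_singleton_iff,
          Set.mem_empty_iff_false, iff_false, not_and]
        intro h1 h2
        rw [h1] at h2
        exact hfz h2
      have h2 : (L ⁻¹' {ℓ} ∩ Z ⁻¹' {z}) ∩ (fun ω => fP (Z ω)) ⁻¹' {t} = ∅ := by
        apply Set.eq_empty_of_subset_empty
        rw [← h0]
        exact Set.inter_subset_inter_left _ Set.inter_subset_right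
      rw [h0, h2]
      simp
  refine ⟨?_, hsuff, ?_, ?_⟩
  · -- condMI = 0
    unfold condMI
    rw [condEnt_jointLZP, hopt, sub_self]
  · -- SuffAlg for σ(P*)
    intro ℓ z
    have h₁ := condexp_comap_finite μ _ hP (L ⁻¹' {ℓ} ∩ Z ⁻¹' {z})
      ((hL (measurableSet_singleton ℓ)).inter (hZ (measurableSet_singleton z)))
    have h₂ := condexp_comap_finite μ _ hP (L ⁻¹' {ℓ})
      (hL (measurableSet_singleton ℓ))
    have h₃ := condexp_comap_finite μ _ hP (Z ⁻¹' {z})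
      (hZ (measurableSet_singleton z))
    refine h₁.trans ?_
    filter_upwards [h₂, h₃] with ω e2 e3
    rw [e2, e3]
    exact hpoint ℓ z (fP (Z ω))
  · -- part (ii)
    intro V hV hVsuff hmin
    have hle : MeasurableSpace.comap (fun ω => fP (Z ω)) inferInstance
        ≤ MeasurableSpace.comap V inferInstance :=
      hmin _ hV.comap_le hVsuff
    refine ⟨hle, ?_⟩
    have hatom : ∀ t : T, ∃ B : Set 𝒱, MeasurableSet B
        ∧ V ⁻¹' B = (fun ω => fP (Z ω)) ⁻¹' {t} := by
      intro t
      exact hle _ ⟨{t}, measurableSet_singleton t, rfl⟩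
    choose B hBmeas hBpre using hatom
    have hmem : ∀ (ω : Ω) (t : T), V ω ∈ B t ↔ fP (Z ω) = t := by
      intro ω t
      constructor
      · intro h
        have : ω ∈ V ⁻¹' B t := h
        rw [hBpre t] at this
        exact this
      · intro h
        have : ω ∈ (fun ω => fP (Z ω)) ⁻¹' {t} := h
        rw [← hBpre t] at this
        exact this
    set χ : 𝒱 → (T → Bool) := fun v t => if v ∈ B t then true else false with hχdef
    have hχ : Measurable χ := by
      apply measurable_pi_lambda
      intro t
      exact Measurable.ite (hBmeas t) measurable_const measurable_const
    set h : (T → Bool) → T := fun b =>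
      if hx : ∃ t, b t = true then hx.choose else Classical.arbitrary T with hhdef
    have hh : Measurable h := measurable_of_countable h
    refine ⟨h ∘ χ, hh.comp hχ, ?_⟩
    apply Filter.EventuallyEq.of_eq
    funext ω
    have hex : ∃ t, χ (V ω) t = true := by
      refine ⟨fP (Z ω), ?_⟩
      simp only [hχdef]
      rw [if_pos ((hmem ω (fP (Z ω))).mpr rfl)]
    have hchoose := hex.choose_spec
    have hmemc : V ω ∈ B hex.choose := by
      by_contra hcon
      simp only [hχdef, if_neg hcon] at hchoose
      exact Bool.false_ne_true hchoose
    have : fP (Z ω) = hex.choose := (hmem ω _).mp hmemc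
    simp only [Function.comp_apply, hhdef, dif_pos hex]
    exact this
end
end

section
/- Consider the latent-factor model: on a probability space, let U : Ω → 𝒰 be the shared latent factor and W = (L, V, ε) : Ω → 𝒲 aggregate the uniformly distributed layer index L on {1,…,N}, the layer-specific latent factor V, and the noise ε, with values in standard Borel spaces; let W' be identically distributed to W with U, W, W' mutually independent. Set Z = q(U, W) and Z' = q(U, W') for a measurable map q, and let C = f_C(Z) and P = f_P(Z) for measurable encoders with C square-integrable in ℝ^d. If (i) E[‖f_C(Z) − f_C(Z')‖²] = 0 (the matching loss attains its global minimum), (ii) L and Z are conditionally independent given P (P is sufficient for the layer index, as enforced at optimality of the self-supervised and causal losses), and (iii) σ(P) ⊆ σ(V) (minimal sufficiency relative to the sufficient σ-algebra σ(V)), then there exist measurable functions h and g such that C = h(U) almost surely and P = g(V) almost surely. Hence the common embedding depends only on the shared latent factor and the private embedding depends only on the layer-specific latent factor, so the two embeddings are disentangled, each encoding only role-specific information. -/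
/-!
STATEMENT 12: In the latent-factor model Z = q(U, W) with W = (L, V, ε), W'
identically distributed to W and U, W, W' mutually independent, if
(i) the matching loss vanishes, E[‖f_C(Z) − f_C(Z')‖²] = 0,
(ii) L and Z are conditionally independent given P = f_P(Z), and
(iii) σ(P) ⊆ σ(V),
then C = f_C(Z) is almost surely a measurable function of U alone and
P is almost surely a measurable function of V alone: the common and private
embeddings are disentangled, each encoding only role-specific information.
-/

open MeasureTheory ProbabilityTheory

open Filter

lemma stmt12_factor_simple {α β : Type*} [mβ : MeasurableSpace β] (f : α → β)
    (s : @SimpleFunc α (mβ.comap f) ℝ) :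
    ∃ h : β → ℝ, Measurable h ∧ ∀ a, s a = h (f a) := by
  letI : MeasurableSpace α := mβ.comap f
  induction s using SimpleFunc.induction with
  | const c hs =>
    obtain ⟨B, hB, hBs⟩ := hs
    refine ⟨B.indicator fun _ => c, measurable_const.indicator hB, fun a => ?_⟩
    simp only [SimpleFunc.piecewise_apply, SimpleFunc.coe_const, Function.const_apply,
      SimpleFunc.coe_zero, Pi.zero_apply, Set.indicator_apply, ← hBs, Set.mem_preimage]
    rfl
  | add _ hf hg =>
    obtain ⟨h₁, h₁m, h₁e⟩ := hf
    obtain ⟨h₂, h₂m, h₂e⟩ := hg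
    exact ⟨fun b => h₁ b + h₂ b, h₁m.add h₂m, fun a => by
      simp [SimpleFunc.coe_add, Pi.add_apply, h₁e a, h₂e a]⟩

lemma stmt12_dd_real {α β : Type*} [mβ : MeasurableSpace β] {f : α → β} {g : α → ℝ}
    (hg : @Measurable α ℝ (mβ.comap f) _ g) :
    ∃ h : β → ℝ, Measurable h ∧ ∀ a, g a = h (f a) := by
  classical
  letI : MeasurableSpace α := mβ.comap f
  have hsm : StronglyMeasurable g := hg.stronglyMeasurable
  have happrox := hsm.tendsto_approx
  choose h hmeas hfac using fun n => stmt12_factor_simple f (hsm.approx n)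
  set S : Set β := {b | ∃ c, Tendsto (fun n => h n b) atTop (nhds c)} with hS
  have hSmeas : MeasurableSet S := measurableSet_exists_tendsto hmeas
  set H : ℕ → β → ℝ := fun n b => if b ∈ S then h n b else 0 with hH
  have hHmeas : ∀ n, Measurable (H n) := fun n => Measurable.ite hSmeas (hmeas n) measurable_const
  have hHconv : ∀ b, ∃ c, Tendsto (fun n => H n b) atTop (nhds c) := by
    intro b
    by_cases hb : b ∈ S
    · obtain ⟨c, hc⟩ := id hb
      exact ⟨c, by simpa only [hH, if_pos hb] using hc⟩
    · exact ⟨0, by simp only [hH, if_neg hb]; exact tendsto_const_nhds⟩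
  set φ : β → ℝ := fun b => limUnder atTop fun n => H n b with hφ
  have hφconv : ∀ b, Tendsto (fun n => H n b) atTop (nhds (φ b)) := fun b =>
    tendsto_nhds_limUnder (hHconv b)
  have hφm : Measurable φ :=
    measurable_of_tendsto_metrizable' atTop hHmeas (tendsto_pi_nhds.mpr hφconv)
  refine ⟨φ, hφm, fun a => ?_⟩
  have h1 : Tendsto (fun n => h n (f a)) atTop (nhds (g a)) := by
    simpa only [hfac] using happrox a
  have hfaS : f a ∈ S := ⟨g a, h1⟩
  have h2 : Tendsto (fun n => H n (f a)) atTop (nhds (g a)) := by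
    simpa only [hH, if_pos hfaS] using h1
  exact tendsto_nhds_unique h2 (hφconv (f a))

lemma stmt12_dd_sb {α β γ : Type*} [mβ : MeasurableSpace β] [mγ : MeasurableSpace γ]
    [StandardBorelSpace γ] [Nonempty γ] {f : α → β} {g : α → γ}
    (hle : mγ.comap g ≤ mβ.comap f) :
    ∃ h : β → γ, Measurable h ∧ ∀ a, g a = h (f a) := by
  obtain ⟨ι, hι⟩ := MeasureTheory.exists_measurableEmbedding_real γ
  have hg' : @Measurable α γ (mβ.comap f) mγ g := measurable_iff_comap_le.mpr hle
  have hcomp : @Measurable α ℝ (mβ.comap f) _ (fun a => ι (g a)) := hι.measurable.comp hg'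
  obtain ⟨h₀, h₀m, h₀fac⟩ := stmt12_dd_real hcomp
  obtain ⟨r, hrm, hrι⟩ := hι.exists_measurable_extend measurable_id fun _ => ‹Nonempty γ›
  refine ⟨r ∘ h₀, hrm.comp h₀m, fun a => ?_⟩
  have h1 : h₀ (f a) = ι (g a) := (h₀fac a).symm
  have h2 : r (ι (g a)) = g a := congrFun hrι (g a)
  simp [Function.comp, h1, h2]

theorem stmt12 {Ω : Type*} [MeasurableSpace Ω] (μ : Measure Ω)
    [IsProbabilityMeasure μ]
    {𝒰 𝒱 ℰ 𝒵 𝔓 : Type*}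
    [MeasurableSpace 𝒰] [StandardBorelSpace 𝒰]
    [MeasurableSpace 𝒱] [StandardBorelSpace 𝒱]
    [MeasurableSpace ℰ] [StandardBorelSpace ℰ]
    [MeasurableSpace 𝒵]
    [MeasurableSpace 𝔓] [StandardBorelSpace 𝔓] [Nonempty 𝔓]
    {N : ℕ} (hN : 0 < N) {d : ℕ}
    -- the shared latent factor, layer index, layer-specific factor and noise
    (U : Ω → 𝒰) (L : Ω → Fin N) (V : Ω → 𝒱) (ε : Ω → ℰ)
    (hU : Measurable U) (hL : Measurable L) (hV : Measurable V)
    (hε : Measurable ε)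
    -- the aggregated variable W = (L, V, ε) and an independent copy W'
    (W W' : Ω → Fin N × 𝒱 × ℰ)
    (hWdef : ∀ ω, W ω = (L ω, V ω, ε ω)) (hW' : Measurable W')
    -- L is uniformly distributed on {1,…,N}
    (hunif : ∀ ℓ : Fin N, μ {ω | L ω = ℓ} = (N : ENNReal)⁻¹)
    -- W and W' are identically distributed
    (hid : Measure.map W μ = Measure.map W' μ)
    -- U, W, W' are mutually independent
    (hWW' : IndepFun W W' μ)
    (hU_WW' : IndepFun U (fun ω => (W ω, W' ω)) μ)
    -- observed data and encoders
    (q : 𝒰 × (Fin N × 𝒱 × ℰ) → 𝒵) (hq : Measurable q)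
    (Z Z' : Ω → 𝒵)
    (hZdef : ∀ ω, Z ω = q (U ω, W ω)) (hZ'def : ∀ ω, Z' ω = q (U ω, W' ω))
    (fC : 𝒵 → EuclideanSpace ℝ (Fin d)) (hfC : Measurable fC)
    (fP : 𝒵 → 𝔓) (hfP : Measurable fP)
    (C : Ω → EuclideanSpace ℝ (Fin d)) (hCdef : ∀ ω, C ω = fC (Z ω))
    (P : Ω → 𝔓) (hPdef : ∀ ω, P ω = fP (Z ω))
    (hC2 : MemLp C 2 μ)
    -- (i) the matching loss attains its global minimum
    (hmatch : ∫ ω, ‖fC (Z ω) - fC (Z' ω)‖ ^ 2 ∂μ = 0)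
    -- (ii) L and Z are conditionally independent given P
    (hcondindep : ∀ (ℓ : Fin N) (s : Set 𝒵), MeasurableSet s →
      (μ[Set.indicator ({ω | L ω = ℓ} ∩ Z ⁻¹' s) (fun _ => (1 : ℝ)) |
          MeasurableSpace.comap P inferInstance])
        =ᵐ[μ] fun ω =>
          (μ[Set.indicator {ω | L ω = ℓ} (fun _ => (1 : ℝ)) |
              MeasurableSpace.comap P inferInstance]) ω *
          (μ[Set.indicator (Z ⁻¹' s) (fun _ => (1 : ℝ)) |
              MeasurableSpace.comap P inferInstance]) ω)
    -- (iii) minimal sufficiency: σ(P) ⊆ σ(V)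
    (hmin : MeasurableSpace.comap P inferInstance
      ≤ MeasurableSpace.comap V inferInstance) :
    -- the common embedding is a.s. a measurable function of U alone
    (∃ h : 𝒰 → EuclideanSpace ℝ (Fin d), Measurable h ∧
      C =ᵐ[μ] fun ω => h (U ω))
    -- and the private embedding is a.s. a measurable function of V alone
    ∧ ∃ g : 𝒱 → 𝔓, Measurable g ∧ P =ᵐ[μ] fun ω => g (V ω) := by
  have hW : Measurable W := by
    have hWe : W = fun ω => (L ω, V ω, ε ω) := funext hWdef
    rw [hWe]; exact hL.prodMk (hV.prodMk hε)
  have hZm : Measurable Z := by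
    have hZe : Z = fun ω => q (U ω, W ω) := funext hZdef
    rw [hZe]; exact hq.comp (hU.prodMk hW)
  have hZ'm : Measurable Z' := by
    have hZe : Z' = fun ω => q (U ω, W' ω) := funext hZ'def
    rw [hZe]; exact hq.comp (hU.prodMk hW')
  constructor
  · -- Part 1: the common embedding is a function of U alone
    set ν : Measure (Fin N × 𝒱 × ℰ) := μ.map W with hν
    set μU : Measure 𝒰 := μ.map U with hμU
    haveI : IsProbabilityMeasure ν := Measure.isProbabilityMeasure_map hW.aemeasurable
    haveI : IsProbabilityMeasure μU := Measure.isProbabilityMeasure_map hU.aemeasurable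
    set F : 𝒰 × (Fin N × 𝒱 × ℰ) → EuclideanSpace ℝ (Fin d) := fun p => fC (q p) with hF
    have hFm : Measurable F := hfC.comp hq
    have hFsm : StronglyMeasurable F := hFm.stronglyMeasurable
    -- laws
    have hIUW : IndepFun U W μ := hU_WW'.comp measurable_id measurable_fst
    have hIUW' : IndepFun U W' μ := hU_WW'.comp measurable_id measurable_snd
    have h1 : μ.map (fun ω => (U ω, W ω)) = μU.prod ν :=
      (indepFun_iff_map_prod_eq_prod_map_map hU.aemeasurable hW.aemeasurable).mp hIUW
    have h2 : μ.map (fun ω => (U ω, W' ω)) = μU.prod (μ.map W') :=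
      (indepFun_iff_map_prod_eq_prod_map_map hU.aemeasurable hW'.aemeasurable).mp hIUW'
    have hWW'map : μ.map (fun ω => (W ω, W' ω)) = ν.prod ν := by
      have h3 := (indepFun_iff_map_prod_eq_prod_map_map hW.aemeasurable hW'.aemeasurable).mp hWW'
      rw [h3, ← hid]
    have htriple : μ.map (fun ω => (U ω, (W ω, W' ω))) = μU.prod (ν.prod ν) := by
      have h4 := (indepFun_iff_map_prod_eq_prod_map_map hU.aemeasurable
        ((hW.prodMk hW').aemeasurable)).mp hU_WW'
      rw [h4, hWW'map]
    -- Step A : fC ∘ Z = fC ∘ Z' a.e.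
    have hmapZ : μ.map Z = μ.map Z' := by
      have h3 : μ.map (fun ω => (U ω, W ω)) = μ.map (fun ω => (U ω, W' ω)) := by
        rw [h1, h2, hid]
      calc μ.map Z = μ.map (q ∘ fun ω => (U ω, W ω)) := by
            congr 1; exact funext hZdef
        _ = (μ.map (fun ω => (U ω, W ω))).map q :=
            (Measure.map_map hq (hU.prodMk hW)).symm
        _ = (μ.map (fun ω => (U ω, W' ω))).map q := by rw [h3]
        _ = μ.map (q ∘ fun ω => (U ω, W' ω)) := Measure.map_map hq (hU.prodMk hW')
        _ = μ.map Z' := by congr 1; exact (funext hZ'def).symm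
    have hCZ : MemLp (fun ω => fC (Z ω)) 2 μ := by
      have hCe : C = fun ω => fC (Z ω) := funext hCdef
      rwa [hCe] at hC2
    have hCZ' : MemLp (fun ω => fC (Z' ω)) 2 μ := by
      have ha : MemLp (fC ∘ Z) 2 μ := hCZ
      have hb : MemLp fC 2 (μ.map Z) :=
        (memLp_map_measure_iff (hfC.aestronglyMeasurable) hZm.aemeasurable).mpr ha
      rw [hmapZ] at hb
      exact (memLp_map_measure_iff (hfC.aestronglyMeasurable) hZ'm.aemeasurable).mp hb
    have hae : (fun ω => fC (Z ω)) =ᵐ[μ] fun ω => fC (Z' ω) := by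
      have hsub : MemLp (fun ω => fC (Z ω) - fC (Z' ω)) 2 μ := hCZ.sub hCZ'
      have hnorm : MemLp (fun ω => ‖fC (Z ω) - fC (Z' ω)‖) 2 μ := hsub.norm
      have hint : Integrable (fun ω => ‖fC (Z ω) - fC (Z' ω)‖ ^ 2) μ := hnorm.integrable_sq
      have h0 : (fun ω => ‖fC (Z ω) - fC (Z' ω)‖ ^ 2) =ᵐ[μ] 0 :=
        (integral_eq_zero_iff_of_nonneg (fun ω => by positivity) hint).mp hmatch
      filter_upwards [h0] with ω hω
      have hω' : ‖fC (Z ω) - fC (Z' ω)‖ ^ 2 = 0 := hω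
      have hn : ‖fC (Z ω) - fC (Z' ω)‖ = 0 := by
        nlinarith [norm_nonneg (fC (Z ω) - fC (Z' ω))]
      exact sub_eq_zero.mp (norm_eq_zero.mp hn)
    -- the bad set A and its nullity
    set A : Set (𝒰 × ((Fin N × 𝒱 × ℰ) × (Fin N × 𝒱 × ℰ))) :=
      {p | F (p.1, p.2.1) ≠ F (p.1, p.2.2)} with hA
    have hAmeas : MeasurableSet A := by
      have hm1 : StronglyMeasurable fun p : 𝒰 × ((Fin N × 𝒱 × ℰ) × (Fin N × 𝒱 × ℰ)) =>
          F (p.1, p.2.1) :=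
        (hFm.comp (measurable_fst.prodMk (measurable_fst.comp measurable_snd))).stronglyMeasurable
      have hm2 : StronglyMeasurable fun p : 𝒰 × ((Fin N × 𝒱 × ℰ) × (Fin N × 𝒱 × ℰ)) =>
          F (p.1, p.2.2) :=
        (hFm.comp (measurable_fst.prodMk (measurable_snd.comp measurable_snd))).stronglyMeasurable
      have := (MeasureTheory.StronglyMeasurable.measurableSet_eq_fun hm1 hm2).compl
      simpa [hA, Set.compl_setOf] using this
    have hA0 : (μU.prod (ν.prod ν)) A = 0 := by
      have hpre : (fun ω => (U ω, (W ω, W' ω))) ⁻¹' A = {ω | ¬ fC (Z ω) = fC (Z' ω)} := by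
        ext ω
        simp [hA, hF, hZdef ω, hZ'def ω]
      have hmap0 : (μ.map (fun ω => (U ω, (W ω, W' ω)))) A = 0 := by
        rw [Measure.map_apply (hU.prodMk (hW.prodMk hW')) hAmeas, hpre]
        exact ae_iff.mp hae
      rwa [htriple] at hmap0
    -- the candidate function h
    set h : 𝒰 → EuclideanSpace ℝ (Fin d) := fun u => ∫ w, F (u, w) ∂ν with hh
    have hhm : Measurable h := hFsm.integral_prod_right'.measurable
    -- for a.e. u, F (u, ·) = h u  ν-a.e.
    have hgood : ∀ᵐ u ∂μU, ∀ᵐ w ∂ν, F (u, w) = h u := by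
      have hsec : (fun u => (ν.prod ν) (Prod.mk u ⁻¹' A)) =ᵐ[μU] 0 :=
        (Measure.measure_prod_null hAmeas).mp hA0
      filter_upwards [hsec] with u hu
      have hu' : (ν.prod ν) (Prod.mk u ⁻¹' A) = 0 := hu
      have hBu : MeasurableSet (Prod.mk u ⁻¹' A) := hAmeas.preimage measurable_prodMk_left
      have hsec2 : (fun w => ν (Prod.mk w ⁻¹' (Prod.mk u ⁻¹' A))) =ᵐ[ν] 0 :=
        (Measure.measure_prod_null hBu).mp hu'
      filter_upwards [hsec2] with w hw
      have hw' : ν {w' | ¬ F (u, w') = F (u, w)} = 0 := by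
        have hseteq : {w' | ¬ F (u, w') = F (u, w)} = Prod.mk w ⁻¹' (Prod.mk u ⁻¹' A) := by
          ext w'
          simp [hA, eq_comm]
        rw [hseteq]
        exact hw
      have hconst : (fun w' => F (u, w')) =ᵐ[ν] fun _ => F (u, w) := ae_iff.mpr hw'
      have : h u = F (u, w) := by
        rw [hh]
        calc ∫ w', F (u, w') ∂ν = ∫ _, F (u, w) ∂ν := integral_congr_ae hconst
          _ = F (u, w) := by simp
      exact this.symm
    -- the bad set D for (U, W)
    set D : Set (𝒰 × (Fin N × 𝒱 × ℰ)) := {p | ¬ F p = h p.1} with hD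
    have hDmeas : MeasurableSet D := by
      have := (MeasureTheory.StronglyMeasurable.measurableSet_eq_fun hFsm
        ((hhm.comp measurable_fst).stronglyMeasurable)).compl
      simpa [hD, Set.compl_setOf] using this
    have hD0 : (μU.prod ν) D = 0 := by
      apply (Measure.measure_prod_null hDmeas).mpr
      filter_upwards [hgood] with u hu
      have : ν {w | ¬ F (u, w) = h u} = 0 := ae_iff.mp hu
      simpa [hD, Set.preimage_setOf_eq] using this
    have hfinal : μ ((fun ω => (U ω, W ω)) ⁻¹' D) = 0 := by
      have h5 := hD0
      rw [← h1] at h5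
      rwa [Measure.map_apply (hU.prodMk hW) hDmeas] at h5
    refine ⟨h, hhm, ?_⟩
    apply ae_iff.mpr
    have hseteq : {ω | ¬ C ω = h (U ω)} = (fun ω => (U ω, W ω)) ⁻¹' D := by
      ext ω
      simp [hD, hF, hCdef ω, hZdef ω]
    rw [hseteq]
    exact hfinal
  · -- Part 2: the private embedding is a function of V alone
    obtain ⟨g, hgm, hgfac⟩ := stmt12_dd_sb (f := V) (g := P) hmin
    exact ⟨g, hgm, ae_of_all μ hgfac⟩
end
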